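/- Let p ∈ ω* and let 𝒯(p) be the topology on ω* whose closed sets are the X with X = X^p. If X ⊆ ω* is 𝒯(p)-open, then X^p is also 𝒯(p)-open. -/

import Mathlib

/-- The Stone–Čech remainder `ω* = β(ω) \ ω`. -/
def omegaStar : Set (StoneCech ℕ) := (Set.range (stoneCechUnit : ℕ → StoneCech ℕ))ᶜ

/-- The Stone extension `f̄ : β(ω) → β(ω)` of a map `f : ω → β(ω)`. -/
noncomputable def stoneExt (f : ℕ → StoneCech ℕ) : StoneCech ℕ → StoneCech ℕ :=
  stoneCechExtend (continuous_of_discreteTopology (f := f))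

/-- `pOp p X = X^p`: the set `X` together with all its `p`-limits `f̄(p)` through countable
discrete subsets `f[ω] ⊆ X` (with `f : ω ≈ f[ω]`, i.e. `f` injective with discrete range). -/
def pOp (p : StoneCech ℕ) (X : Set (StoneCech ℕ)) : Set (StoneCech ℕ) :=
  X ∪ {y | ∃ f : ℕ → StoneCech ℕ, Function.Injective f ∧ Set.range f ⊆ X ∧
    DiscreteTopology (Set.range f) ∧ stoneExt f p = y}

/-- `X` is `𝒯(p)`-open: `X ⊆ ω*` and its complement in `ω*` is `𝒯(p)`-closed,
i.e. fixed by the operator `X ↦ X^p`. -/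
def TpOpen (p : StoneCech ℕ) (X : Set (StoneCech ℕ)) : Prop :=
  X ⊆ omegaStar ∧ pOp p (omegaStar \ X) = omegaStar \ X

open Filter Set


noncomputable def Phi : StoneCech ℕ → Ultrafilter ℕ :=
  stoneCechExtend (continuous_of_discreteTopology (f := (pure : ℕ → Ultrafilter ℕ)))

noncomputable def Psi : Ultrafilter ℕ → StoneCech ℕ :=
  Ultrafilter.extend stoneCechUnit

lemma Phi_unit (n : ℕ) : Phi (stoneCechUnit n) = pure n :=
  congrFun (stoneCechExtend_extends _) n

lemma Psi_pure (n : ℕ) : Psi (pure n) = stoneCechUnit n :=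
  congrFun (ultrafilter_extend_extends _) n

lemma continuous_Phi : Continuous Phi := continuous_stoneCechExtend _
lemma continuous_Psi : Continuous Psi := continuous_ultrafilter_extend _

lemma Phi_Psi (u : Ultrafilter ℕ) : Phi (Psi u) = u := by
  have : Phi ∘ Psi = id := by
    apply (continuous_Phi.comp continuous_Psi).ext_on denseRange_pure continuous_id
    rintro _ ⟨n, rfl⟩
    simp [Function.comp, Psi_pure, Phi_unit]
  exact congrFun this u

lemma Psi_Phi (x : StoneCech ℕ) : Psi (Phi x) = x := by
  have : Psi ∘ Phi = id := by
    apply (continuous_Psi.comp continuous_Phi).ext_on denseRange_stoneCechUnit continuous_id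
    rintro _ ⟨n, rfl⟩
    simp [Function.comp, Psi_pure, Phi_unit]
  exact congrFun this x

lemma Phi_injective : Function.Injective Phi :=
  Function.LeftInverse.injective Psi_Phi

lemma mem_ubind {α β : Type*} {p : Ultrafilter α} {F : α → Ultrafilter β} {s : Set β} :
    s ∈ p.bind F ↔ {n | s ∈ F n} ∈ p :=
  Filter.mem_bind'

lemma uf_exists_mem_not_mem {F G : Ultrafilter ℕ} (h : F ≠ G) : ∃ s, s ∈ F ∧ s ∉ G := by
  by_contra hc
  push_neg at hc
  exact h (Ultrafilter.coe_le_coe.mp fun s hs => hc s hs).symm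

/-- The set of indices where the family concentrates on a single fiber of `b`. -/
def Pset (F : ℕ → Ultrafilter ℕ) (b : ℕ → ℕ) : Set ℕ := {n | ∃ m, b ⁻¹' {m} ∈ F n}

open Classical in
/-- The fiber of `b` that `F n` concentrates on, if any. -/
noncomputable def kfun (F : ℕ → Ultrafilter ℕ) (b : ℕ → ℕ) (n : ℕ) : ℕ :=
  if h : ∃ m, b ⁻¹' {m} ∈ F n then h.choose else 0

lemma kfun_spec {F : ℕ → Ultrafilter ℕ} {b : ℕ → ℕ} {n : ℕ} (h : n ∈ Pset F b) :
    b ⁻¹' {kfun F b n} ∈ F n := by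
  have h' : ∃ m, b ⁻¹' {m} ∈ F n := h
  rw [kfun, dif_pos h']
  exact h'.choose_spec

section Key

variable {p : Ultrafilter ℕ} {F G : ℕ → Ultrafilter ℕ} {a b : ℕ → ℕ}

lemma fiber_pull (hF : ∀ n, a ⁻¹' {n} ∈ F n) (s : Set ℕ) :
    a ⁻¹' s ∈ p.bind F ↔ s ∈ p := by
  rw [mem_ubind]
  have : {n | a ⁻¹' s ∈ F n} = s := by
    ext n
    constructor
    · intro hn
      obtain ⟨x, hx1, hx2⟩ := Ultrafilter.nonempty_of_mem (inter_mem hn (hF n))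
      simpa [show a x = n from hx2] using hx1
    · intro hn
      refine Filter.mem_of_superset (hF n) (fun x hx => ?_)
      simp only [Set.mem_preimage, Set.mem_singleton_iff] at hx
      show a x ∈ s
      rw [hx]; exact hn
  rw [this]

lemma gt_fiber_mem (hG : ∀ n, a ⁻¹' {n} ∈ F n) {n : ℕ} (hn : n ∉ Pset F b) (c : ℕ) :
    {x | c < b x} ∈ F n := by
  have hfin : (Set.Iic c).Finite := Set.finite_Iic c
  have hnot : b ⁻¹' (Set.Iic c) ∉ F n := by
    intro hmem
    have : b ⁻¹' (Set.Iic c) = ⋃ m ∈ Set.Iic c, b ⁻¹' {m} := by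
      ext x; simp
    rw [this] at hmem
    obtain ⟨m, _, hm⟩ := (Ultrafilter.finite_biUnion_mem_iff hfin).mp hmem
    exact hn ⟨m, hm⟩
  have := Ultrafilter.compl_mem_iff_notMem.mpr hnot
  have heq : (b ⁻¹' (Set.Iic c))ᶜ = {x | c < b x} := by
    ext x; simp [not_le]
  rwa [heq] at this

lemma pmap_k (hF : ∀ n, a ⁻¹' {n} ∈ F n) (hG : ∀ m, b ⁻¹' {m} ∈ G m)
    (hq : p.bind F = p.bind G) (hw : Pset G a ∈ p) :
    ∀ s : Set ℕ, kfun G a ⁻¹' s ∈ p → s ∈ p := by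
  intro s hks
  set k := kfun G a with hk
  have hY : {x | b x ∈ Pset G a ∧ a x = k (b x)} ∈ p.bind G := by
    rw [mem_ubind]
    refine Filter.mem_of_superset hw (fun m hm => ?_)
    refine Filter.mem_of_superset (inter_mem (kfun_spec hm) (hG m)) ?_
    rintro x ⟨hx1, hx2⟩
    have hbx : b x = m := hx2
    exact ⟨by rwa [hbx], by rw [hbx]; exact hx1⟩
  have hW : b ⁻¹' (k ⁻¹' s) ∈ p.bind G := (fiber_pull hG _).mpr hks
  have hsub : {x | b x ∈ Pset G a ∧ a x = k (b x)} ∩ b ⁻¹' (k ⁻¹' s) ⊆ a ⁻¹' s := by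
    rintro x ⟨⟨_, hx2⟩, hx3⟩
    simpa [Set.mem_preimage, hx2] using hx3
  have : a ⁻¹' s ∈ p.bind F := by
    rw [hq]
    exact Filter.mem_of_superset (inter_mem hY hW) hsub
  exact (fiber_pull hF s).mp this

/-- Descent depth along `k` (length of the strictly decreasing `k`-iteration chain). -/
def desc (k : ℕ → ℕ) (m : ℕ) : ℕ :=
  if h : k m < m then desc k (k m) + 1 else 0
termination_by m
decreasing_by exact h

lemma case_nn (hF : ∀ n, a ⁻¹' {n} ∈ F n) (hG : ∀ m, b ⁻¹' {m} ∈ G m)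
    (hq : p.bind F = p.bind G) (hv : (Pset F b)ᶜ ∈ p) (hw : (Pset G a)ᶜ ∈ p) : False := by
  have hX : {x | a x < b x} ∈ p.bind F := by
    rw [mem_ubind]
    refine Filter.mem_of_superset hv (fun n hn => ?_)
    refine Filter.mem_of_superset (inter_mem (hF n) (gt_fiber_mem hF hn n)) ?_
    rintro x ⟨hx1, hx2⟩
    have : a x = n := hx1
    exact lt_of_eq_of_lt this hx2
  have hX' : {x | b x < a x} ∈ p.bind F := by
    rw [hq, mem_ubind]
    refine Filter.mem_of_superset hw (fun m hm => ?_)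
    refine Filter.mem_of_superset (inter_mem (hG m) (gt_fiber_mem hG hm m)) ?_
    rintro x ⟨hx1, hx2⟩
    have : b x = m := hx1
    exact lt_of_eq_of_lt this hx2
  obtain ⟨x, h1, h2⟩ := Ultrafilter.nonempty_of_mem (inter_mem hX hX')
  have h1' : a x < b x := h1
  have h2' : b x < a x := h2
  exact absurd h2' (lt_asymm h1')

lemma case_mixed (hF : ∀ n, a ⁻¹' {n} ∈ F n) (hG : ∀ m, b ⁻¹' {m} ∈ G m)
    (hq : p.bind F = p.bind G) (hv : (Pset F b)ᶜ ∈ p) (hw : Pset G a ∈ p) : False := by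
  set k := kfun G a with hkdef
  -- `{m | k m < m}` is large
  have hY : {x | a x < b x} ∈ p.bind G := by
    rw [← hq, mem_ubind]
    refine Filter.mem_of_superset hv (fun n hn => ?_)
    refine Filter.mem_of_superset (inter_mem (hF n) (gt_fiber_mem hF hn n)) ?_
    rintro x ⟨hx1, hx2⟩
    have : a x = n := hx1
    exact lt_of_eq_of_lt this hx2
  rw [mem_ubind] at hY
  have hMlt : {m | m ∈ Pset G a ∧ k m < m} ∈ p := by
    refine Filter.mem_of_superset (inter_mem hw hY) ?_
    rintro m ⟨hm1, hm2⟩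
    refine ⟨hm1, ?_⟩
    obtain ⟨x, hx1, hx2, hx3⟩ :=
      Ultrafilter.nonempty_of_mem (inter_mem hm2 (inter_mem (kfun_spec hm1) (hG m)))
    have ha : a x = k m := hx2
    have hb : b x = m := hx3
    rw [← ha, ← hb]
    exact hx1
  have hpk := pmap_k hF hG hq hw
  -- parity argument
  set T := {m | Even (desc k m)} with hT
  have hflip : ∀ m, k m < m → desc k m = desc k (k m) + 1 := by
    intro m hm
    rw [desc, dif_pos hm]
  rcases p.mem_or_compl_mem T with hTp | hTp
  · have : kfun G a ⁻¹' Tᶜ ∈ p := by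
      refine Filter.mem_of_superset (inter_mem hTp hMlt) ?_
      rintro m ⟨hm1, _, hm3⟩
      show ¬ Even (desc k (k m))
      have hm1' : Even (desc k m) := hm1
      rw [hflip m hm3, Nat.even_add_one] at hm1'
      exact not_not.mp (fun hcon => hcon hm1')
    exact (Ultrafilter.compl_mem_iff_notMem.mp (hpk _ this)) hTp
  · have : kfun G a ⁻¹' T ∈ p := by
      refine Filter.mem_of_superset (inter_mem hTp hMlt) ?_
      rintro m ⟨hm1, _, hm3⟩
      show Even (desc k (k m))
      have hm1' : ¬ Even (desc k m) := hm1
      rw [hflip m hm3, Nat.even_add_one] at hm1'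
      exact not_not.mp hm1'
    exact (Ultrafilter.compl_mem_iff_notMem.mp hTp) (hpk _ this)

lemma case_pp (hF : ∀ n, a ⁻¹' {n} ∈ F n) (hG : ∀ m, b ⁻¹' {m} ∈ G m)
    (hq : p.bind F = p.bind G) (hFG : ∀ n m, F n ≠ G m)
    (hv : Pset F b ∈ p) (hw : Pset G a ∈ p) : False := by
  set h := kfun F b with hhdef
  set k := kfun G a with hkdef
  have hY : {x | a x ∈ Pset F b ∧ b x = h (a x)} ∈ p.bind F := by
    rw [mem_ubind]
    refine Filter.mem_of_superset hv (fun n hn => ?_)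
    refine Filter.mem_of_superset (inter_mem (hF n) (kfun_spec hn)) ?_
    rintro x ⟨hx1, hx2⟩
    have ha : a x = n := hx1
    have hb : b x = h n := hx2
    exact ⟨by rwa [ha], by rw [ha, hb]⟩
  rw [hq, mem_ubind] at hY
  set R := {m | m ∈ Pset G a ∧ k m ∈ Pset F b ∧ h (k m) = m} with hR
  have hRp : R ∈ p := by
    refine Filter.mem_of_superset (inter_mem hY hw) ?_
    rintro m ⟨hm1, hm2⟩
    obtain ⟨x, hx1, hx2, hx3⟩ :=
      Ultrafilter.nonempty_of_mem (inter_mem hm1 (inter_mem (kfun_spec hm2) (hG m)))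
    have ha : a x = k m := hx2
    have hb : b x = m := hx3
    obtain ⟨hx4, hx5⟩ := hx1
    exact ⟨hm2, by rwa [ha] at hx4, by rw [← ha, ← hx5, hb]⟩
  -- separating sets
  have hsep : ∀ m, ∃ s, s ∈ F (k m) ∧ s ∉ G m := fun m => uf_exists_mem_not_mem (hFG (k m) m)
  choose E hE1 hE2 using hsep
  set X := {x | b x ∈ R ∧ a x = k (b x) ∧ x ∈ E (b x)} with hX
  have hXF : X ∈ p.bind F := by
    rw [mem_ubind]
    have himg : k '' R ∈ p := by
      apply pmap_k hF hG hq hw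
      exact Filter.mem_of_superset hRp (fun m hm => Set.mem_image_of_mem k hm)
    refine Filter.mem_of_superset himg ?_
    rintro n ⟨m, hmR, rfl⟩
    obtain ⟨hm1, hm2, hm3⟩ := id hmR
    refine Filter.mem_of_superset
      (inter_mem (hF (k m)) (inter_mem (kfun_spec hm2) (hE1 m))) ?_
    rintro x ⟨hx1, hx2, hx3⟩
    have ha : a x = k m := hx1
    have hb : b x = h (k m) := hx2
    have hbm : b x = m := by rw [hb, hm3]
    refine ⟨by rw [hbm]; exact hmR, by rw [hbm, ha], by rwa [hbm]⟩
  have hXG : Xᶜ ∈ p.bind G := by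
    rw [mem_ubind]
    refine Filter.mem_of_superset hRp (fun m hm => ?_)
    obtain ⟨hm1, hm2, hm3⟩ := hm
    refine Filter.mem_of_superset
      (inter_mem (kfun_spec hm1) (inter_mem (hG m)
        (Ultrafilter.compl_mem_iff_notMem.mpr (hE2 m)))) ?_
    rintro x ⟨hx1, hx2, hx3⟩
    intro hxX
    obtain ⟨_, _, hx6⟩ := hxX
    have hb : b x = m := hx2
    rw [hb] at hx6
    exact hx3 hx6
  rw [hq] at hXF
  exact (Ultrafilter.compl_mem_iff_notMem.mp hXG) hXF

lemma key_ne (hF : ∀ n, a ⁻¹' {n} ∈ F n) (hG : ∀ m, b ⁻¹' {m} ∈ G m)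
    (hFG : ∀ n m, F n ≠ G m) : p.bind F ≠ p.bind G := by
  intro hq
  rcases p.mem_or_compl_mem (Pset F b) with hv | hv <;>
    rcases p.mem_or_compl_mem (Pset G a) with hw | hw
  · exact case_pp hF hG hq hFG hv hw
  · exact case_mixed hG hF hq.symm hw hv
  · exact case_mixed hF hG hq hv hw
  · exact case_nn hF hG hq hv hw


end Key


lemma joinM_eq_bind {α : Type*} (u : Ultrafilter α) (F : α → Ultrafilter α) :
    joinM (u.map F) = u.bind F := by
  apply Ultrafilter.coe_injective
  apply Filter.ext
  intro s
  have h1 : s ∈ joinM (u.map F) ↔ {v : Ultrafilter α | s ∈ v} ∈ u.map F := by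
    change s ∈ Ultrafilter.bind _ id ↔ _
    rw [mem_ubind]; rfl
  rw [Ultrafilter.mem_coe, Ultrafilter.mem_coe, h1, Ultrafilter.mem_map, mem_ubind]; rfl

lemma ultrafilter_extend_eq_bind {α : Type*} (u : Ultrafilter α) (F : α → Ultrafilter α) :
    Ultrafilter.extend F u = u.bind F := by
  rw [ultrafilter_extend_eq_iff, ultrafilter_converges_iff, joinM_eq_bind]
lemma Phi_stoneExt (f : ℕ → StoneCech ℕ) (x : StoneCech ℕ) :
    Phi (stoneExt f x) = (Phi x).bind (fun n => Phi (f n)) := by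
  have h : Phi ∘ stoneExt f = fun y => Ultrafilter.extend (fun n => Phi (f n)) (Phi y) := by
    apply stoneCech_hom_ext (continuous_Phi.comp (continuous_stoneCechExtend _))
      ((continuous_ultrafilter_extend _).comp continuous_Phi)
    funext n
    have h1 : stoneExt f (stoneCechUnit n) = f n := congrFun (stoneCechExtend_extends _) n
    have h2 : Ultrafilter.extend (fun n => Phi (f n)) (pure n) = Phi (f n) :=
      congrFun (ultrafilter_extend_extends _) n
    show Phi (stoneExt f (stoneCechUnit n)) = Ultrafilter.extend (fun n => Phi (f n)) (Phi (stoneCechUnit n))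
    rw [h1, Phi_unit, h2]
  have := congrFun h x
  simp only [Function.comp] at this
  rw [this, ultrafilter_extend_eq_bind]
section Glue

lemma eq_pure_of_singleton_mem {u : Ultrafilter ℕ} {j : ℕ} (h : {j} ∈ u) : u = pure j := by
  obtain ⟨x, hx, hux⟩ := Ultrafilter.eq_pure_of_finite_mem (Set.finite_singleton j) h
  rwa [Set.mem_singleton_iff.mp hx] at hux

lemma separating_sets (f : ℕ → StoneCech ℕ) (hinj : Function.Injective f)
    (hdisc : DiscreteTopology (Set.range f)) (n : ℕ) :
    ∃ S : Set ℕ, S ∈ Phi (f n) ∧ ∀ m, m ≠ n → S ∉ Phi (f m) := by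
  have hopen : IsOpen ({⟨f n, ⟨n, rfl⟩⟩} : Set (Set.range f)) := isOpen_discrete _
  rw [isOpen_induced_iff] at hopen
  obtain ⟨U, hU, hUeq⟩ := hopen
  have hfn : f n ∈ U := by
    have : (⟨f n, ⟨n, rfl⟩⟩ : Set.range f) ∈ Subtype.val ⁻¹' U := by
      rw [hUeq]; rfl
    exact this
  have hV : IsOpen (Psi ⁻¹' U) := hU.preimage continuous_Psi
  have hmem : Phi (f n) ∈ Psi ⁻¹' U := by
    show Psi (Phi (f n)) ∈ U
    rwa [Psi_Phi]
  obtain ⟨v, hvB, hxv, hvsub⟩ :=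
    ultrafilterBasis_is_basis.exists_subset_of_mem_open hmem hV
  obtain ⟨S, rfl⟩ := hvB
  refine ⟨S, hxv, fun m hmn hS => ?_⟩
  have : Psi (Phi (f m)) ∈ U := hvsub hS
  rw [Psi_Phi] at this
  have hmm : (⟨f m, ⟨m, rfl⟩⟩ : Set.range f) ∈ Subtype.val ⁻¹' U := this
  rw [hUeq, Set.mem_singleton_iff, Subtype.ext_iff] at hmm
  exact hmn (hinj hmm)

lemma exists_fiber_map (f : ℕ → StoneCech ℕ) (hinj : Function.Injective f)
    (hdisc : DiscreteTopology (Set.range f)) :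
    ∃ a : ℕ → ℕ, ∀ n, a ⁻¹' {n} ∈ Phi (f n) := by
  choose S hS1 hS2 using separating_sets f hinj hdisc
  set A : ℕ → Set ℕ := fun n => S n ∩ ⋂ m ∈ Finset.range n, (S m)ᶜ with hA
  have hAmem : ∀ n, A n ∈ Phi (f n) := by
    intro n
    refine inter_mem (hS1 n) ((Filter.biInter_finset_mem _).mpr fun m hm => ?_)
    have hmn : (n : ℕ) ≠ m := by
      intro h; rw [h] at hm; exact absurd (Finset.mem_range.mp hm) (lt_irrefl m)
    exact Ultrafilter.compl_mem_iff_notMem.mpr (hS2 m n hmn)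
  have hdisj : ∀ {m n : ℕ}, m ≠ n → A m ∩ A n = ∅ := by
    intro m n hmn
    rcases lt_or_gt_of_ne hmn with hlt | hlt
    · ext x
      simp only [Set.mem_inter_iff, Set.mem_empty_iff_false, iff_false, not_and]
      intro hxm hxn
      have := hxn.2
      simp only [Set.mem_iInter] at this
      exact this m (Finset.mem_range.mpr hlt) hxm.1
    · ext x
      simp only [Set.mem_inter_iff, Set.mem_empty_iff_false, iff_false, not_and]
      intro hxm hxn
      have := hxm.2
      simp only [Set.mem_iInter] at this
      exact absurd hxn.1 (this n (Finset.mem_range.mpr hlt))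
  classical
  refine ⟨fun x => if h : ∃ n, x ∈ A n then h.choose else 0, fun n => ?_⟩
  refine Filter.mem_of_superset (hAmem n) (fun x hx => ?_)
  have hex : ∃ n', x ∈ A n' := ⟨n, hx⟩
  show (if h : ∃ n', x ∈ A n' then h.choose else 0) ∈ ({n} : Set ℕ)
  rw [dif_pos hex, Set.mem_singleton_iff]
  by_contra hne
  have := hdisj hne
  exact absurd (Set.mem_inter hex.choose_spec hx) (by rw [this]; exact fun h => h)

lemma bind_ne_pure {p : Ultrafilter ℕ} {F : ℕ → Ultrafilter ℕ}
    (hF : ∀ n j, F n ≠ pure j) (j : ℕ) : p.bind F ≠ pure j := by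
  intro h
  have : ({j} : Set ℕ) ∈ p.bind F := by rw [h]; exact Ultrafilter.mem_pure.mpr rfl
  rw [mem_ubind] at this
  obtain ⟨n, hn⟩ := Ultrafilter.nonempty_of_mem this
  exact hF n j (eq_pure_of_singleton_mem hn)

lemma mem_omegaStar_iff {x : StoneCech ℕ} : x ∈ omegaStar ↔ ∀ j, Phi x ≠ pure j := by
  constructor
  · intro hx j hj
    exact hx ⟨j, by rw [← Psi_Phi x, hj, Psi_pure]⟩
  · rintro h ⟨j, rfl⟩
    exact h j (Phi_unit j)

lemma stoneExt_mem_omegaStar {f : ℕ → StoneCech ℕ} (hf : ∀ n, f n ∈ omegaStar)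
    (p : StoneCech ℕ) : stoneExt f p ∈ omegaStar := by
  rw [mem_omegaStar_iff, Phi_stoneExt]
  exact bind_ne_pure (fun n => mem_omegaStar_iff.mp (hf n))

end Glue

/-- Corollary 5.7: if `X ⊆ ω*` is `𝒯(p)`-open, then so is `X^p`. -/
theorem TpOpen_pOp (p : StoneCech ℕ) (hp : p ∈ omegaStar) (X : Set (StoneCech ℕ))
    (hX : TpOpen p X) : TpOpen p (pOp p X) := by
  obtain ⟨hX1, hX2⟩ := hX
  have hsub : X ⊆ pOp p X := fun y hy => Or.inl hy
  have hOsub : omegaStar \ pOp p X ⊆ omegaStar \ X :=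
    fun y hy => ⟨hy.1, fun h => hy.2 (hsub h)⟩
  constructor
  · rintro y (hy | ⟨f, hfi, hfr, hfd, rfl⟩)
    · exact hX1 hy
    · exact stoneExt_mem_omegaStar (fun n => hX1 (hfr ⟨n, rfl⟩)) p
  · apply Set.Subset.antisymm
    · rintro y (hy | ⟨f, hfi, hfr, hfd, rfl⟩)
      · exact hy
      · have hfO : Set.range f ⊆ omegaStar \ X := fun z hz => hOsub (hfr hz)
        have hyO : stoneExt f p ∈ omegaStar \ X := by
          rw [← hX2]
          exact Or.inr ⟨f, hfi, hfO, hfd, rfl⟩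
        refine ⟨hyO.1, ?_⟩
        rintro (hy | ⟨g, hgi, hgr, hgd, hgp⟩)
        · exact hyO.2 hy
        · obtain ⟨a, ha⟩ := exists_fiber_map f hfi hfd
          obtain ⟨b, hb⟩ := exists_fiber_map g hgi hgd
          have hfg : ∀ n m, Phi (f n) ≠ Phi (g m) := by
            intro n m hc
            have hfg' : f n = g m := Phi_injective hc
            have h1 : f n ∈ omegaStar \ pOp p X := hfr ⟨n, rfl⟩
            exact h1.2 (hfg' ▸ hsub (hgr ⟨m, rfl⟩))
          have heq : (Phi p).bind (fun n => Phi (f n)) = (Phi p).bind (fun m => Phi (g m)) := by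
            rw [← Phi_stoneExt, ← Phi_stoneExt, hgp]
          exact absurd heq (key_ne ha hb hfg)
    · intro y hy
      exact Or.inl hy
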